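/- arXiv:1410.4317 — 6 statements merged into one kernel-verified Lean document; each statement's English description precedes it below -/
import Mathlib

section
/- Along any solution of the static equation, the functional Q(r) = cosh²r · W'(r)² − (ℓ(ℓ+1)/2)·(1 − W(r)²)² satisfies Q'(r) = sinh(2r)·W'(r)²; in particular Q is nondecreasing on [0,∞). -/
/-- Along any solution of the static equation, the functional
`Q(r) = cosh²r · W'(r)² − (ℓ(ℓ+1)/2)(1 − W(r)²)²` satisfies
`Q'(r) = sinh(2r) W'(r)²`; in particular `Q` is nondecreasing on `[0,∞)`. -/
theorem Q_monotone (ℓ : ℝ) (hℓ : 0 < ℓ) (W : ℝ → ℝ)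
    (hW : ContDiff ℝ 2 W)
    (hODE : ∀ r : ℝ, deriv (deriv W) r
      + ℓ * (ℓ + 1) / (Real.cosh r) ^ 2 * W r * (1 - (W r) ^ 2) = 0)
    (Q : ℝ → ℝ)
    (hQ : ∀ r : ℝ, Q r = (Real.cosh r) ^ 2 * (deriv W r) ^ 2
      - ℓ * (ℓ + 1) / 2 * (1 - (W r) ^ 2) ^ 2) :
    (∀ r : ℝ, deriv Q r = Real.sinh (2 * r) * (deriv W r) ^ 2)
      ∧ MonotoneOn Q (Set.Ici (0 : ℝ)) := by
  have hW1 : Differentiable ℝ W := hW.differentiable two_ne_zero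
  have hW' : ContDiff ℝ 1 (deriv W) :=
    (contDiff_succ_iff_deriv.mp (show ContDiff ℝ (1 + 1 : WithTop ℕ∞) W from by norm_num; exact hW)).2.2
  have hW'd : Differentiable ℝ (deriv W) := hW'.differentiable one_ne_zero
  have hQeq : Q = fun r => (Real.cosh r) ^ 2 * (deriv W r) ^ 2
      - ℓ * (ℓ + 1) / 2 * (1 - (W r) ^ 2) ^ 2 := funext hQ
  have key : ∀ r : ℝ, HasDerivAt Q (Real.sinh (2 * r) * (deriv W r) ^ 2) r := by
    intro r
    have h1 : HasDerivAt W (deriv W r) r := (hW1 r).hasDerivAt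
    have h2 : HasDerivAt (deriv W) (deriv (deriv W) r) r := (hW'd r).hasDerivAt
    have hc : HasDerivAt (fun r => (Real.cosh r) ^ 2)
        (2 * Real.cosh r ^ 1 * Real.sinh r) r := (Real.hasDerivAt_cosh r).pow 2
    have hw2 : HasDerivAt (fun r => (deriv W r) ^ 2)
        (2 * deriv W r ^ 1 * deriv (deriv W) r) r := h2.pow 2
    have h1m : HasDerivAt (fun r => 1 - (W r) ^ 2)
        (0 - 2 * W r ^ 1 * deriv W r) r := (hasDerivAt_const r 1).sub (h1.pow 2)
    have h1m2 : HasDerivAt (fun r => ℓ * (ℓ + 1) / 2 * (1 - (W r) ^ 2) ^ 2)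
        (ℓ * (ℓ + 1) / 2 * (2 * (1 - (W r) ^ 2) ^ 1 * (0 - 2 * W r ^ 1 * deriv W r))) r :=
      (h1m.pow 2).const_mul _
    have hD := (hc.mul hw2).sub h1m2
    rw [hQeq]
    refine hD.congr_deriv ?_
    have hcosh : (Real.cosh r) ^ 2 ≠ 0 := by positivity
    have hODEr := hODE r
    have hdd : deriv (deriv W) r = -(ℓ * (ℓ + 1) / (Real.cosh r) ^ 2 * W r * (1 - (W r) ^ 2)) := by
      linarith
    rw [hdd, Real.sinh_two_mul]
    field_simp
    ring
  refine ⟨fun r => (key r).deriv, ?_⟩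
  apply monotoneOn_of_deriv_nonneg (convex_Ici 0)
  · exact fun r _ => (key r).continuousAt.continuousWithinAt
  · exact fun r _ => ((key r).differentiableAt).differentiableWithinAt
  · intro x hx
    rw [(key x).deriv]
    have hx0 : (0 : ℝ) ≤ x := le_of_lt (by simpa using hx)
    have : 0 ≤ Real.sinh (2 * x) := by rw [show (0:ℝ) = Real.sinh 0 by simp]; exact Real.sinh_le_sinh.mpr (by linarith)
    positivity
end

section
/- If W is a solution of the static equation with |W(r)| < 1 for all r ≥ 0 and Q(r₀) > 0 for some r₀ ≥ 0, then there exists r₁ > r₀ with |W(r₁)| = 1, giving a contradiction; hence any solution staying in the strip |W| < 1 for all r ≥ 0 satisfies Q(r) ≤ 0 for all r ≥ 0. -/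
lemma Q_pos_absurd (ℓ : ℝ) (hℓ : 0 < ℓ) (W : ℝ → ℝ)
    (hW : ContDiff ℝ 2 W)
    (hODE : ∀ r : ℝ, deriv (deriv W) r
      + ℓ * (ℓ + 1) / (Real.cosh r) ^ 2 * W r * (1 - (W r) ^ 2) = 0)
    (Q : ℝ → ℝ)
    (hQ : ∀ r : ℝ, Q r = (Real.cosh r) ^ 2 * (deriv W r) ^ 2
      - ℓ * (ℓ + 1) / 2 * (1 - (W r) ^ 2) ^ 2)
    (hstrip : ∀ r : ℝ, 0 ≤ r → |W r| < 1)
    (r₀ : ℝ) (hr₀ : 0 ≤ r₀) (hQpos : 0 < Q r₀) : False := by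
  set K : ℝ := ℓ * (ℓ + 1) / 2 with hK
  have hKpos : 0 < K := by positivity
  have hWd : Differentiable ℝ W := hW.differentiable (by norm_num)
  have hW1 : ContDiff ℝ 1 (deriv W) := by
    have h := (contDiff_succ_iff_deriv.mp (show ContDiff ℝ (1 + 1) W by norm_num; exact hW)).2
    exact h.2
  have hW1d : Differentiable ℝ (deriv W) := hW1.differentiable (by norm_num)
  set P : ℝ → ℝ := fun r => (deriv W r) ^ 2 - K * ((1 - (W r) ^ 2) ^ 2 / (Real.cosh r) ^ 2)
    with hP
  have hcosh : ∀ r : ℝ, (0:ℝ) < Real.cosh r := fun r => Real.cosh_pos r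
  -- derivative of P
  have hPD : ∀ r : ℝ, HasDerivAt P
      (2 * K * Real.sinh r * (1 - (W r) ^ 2) ^ 2 / (Real.cosh r) ^ 3) r := by
    intro r
    have h1 : HasDerivAt (fun r => (deriv W r) ^ 2)
        (2 * deriv W r * deriv (deriv W) r) r := by
      have := ((hW1d r).hasDerivAt).pow 2
      exact this.congr_deriv (by ring)
    have h2 : HasDerivAt (fun r => (1 - (W r) ^ 2) ^ 2)
        (2 * (1 - (W r) ^ 2) * (-(2 * W r * deriv W r))) r := by
      have hw2 : HasDerivAt (fun r => 1 - (W r) ^ 2) (-(2 * W r * deriv W r)) r := by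
        have := (hasDerivAt_const r (1:ℝ)).sub (((hWd r).hasDerivAt).pow 2)
        exact this.congr_deriv (by ring)
      have := hw2.pow 2
      exact this.congr_deriv (by ring)
    have h3 : HasDerivAt (fun r => (Real.cosh r) ^ 2)
        (2 * Real.cosh r * Real.sinh r) r := by
      have := (Real.hasDerivAt_cosh r).pow 2
      exact this.congr_deriv (by ring)
    have hne : (Real.cosh r) ^ 2 ≠ 0 := by positivity
    have hdiv := (h2.div h3 hne).const_mul K
    have hfull := h1.sub hdiv
    refine hfull.congr_deriv ?_
    have hODEr : deriv (deriv W) r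
        = -(ℓ * (ℓ + 1) / (Real.cosh r) ^ 2 * W r * (1 - (W r) ^ 2)) := by
      linarith [hODE r]
    rw [hODEr]
    have hcne : Real.cosh r ≠ 0 := ne_of_gt (hcosh r)
    field_simp
    ring
  have hPdiff : Differentiable ℝ P := fun r => (hPD r).differentiableAt
  -- P is monotone on [0, ∞)
  have hPmono : MonotoneOn P (Set.Ici (0:ℝ)) := by
    apply monotoneOn_of_deriv_nonneg (convex_Ici 0) hPdiff.continuous.continuousOn
      hPdiff.differentiableOn
    intro x hx
    rw [interior_Ici] at hx
    show (0:ℝ) ≤ deriv P x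
    rw [(hPD x).deriv]
    have hsinh : 0 ≤ Real.sinh x := by
      rw [← Real.sinh_zero]; exact Real.sinh_le_sinh.mpr (le_of_lt hx)
    positivity
  have hc : 0 < P r₀ := by
    have : P r₀ = Q r₀ / (Real.cosh r₀) ^ 2 := by
      simp only [hP, hQ r₀]
      have : (Real.cosh r₀) ^ 2 ≠ 0 := by positivity
      field_simp
    rw [this]
    positivity
  set c : ℝ := P r₀ with hcdef
  clear_value c
  have hsc : 0 < Real.sqrt c := Real.sqrt_pos.mpr hc
  -- for r ≥ r₀, |deriv W r| ≥ √c
  have hbig : ∀ r : ℝ, r₀ ≤ r → Real.sqrt c ≤ |deriv W r| := by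
    intro r hr
    have hPr : c ≤ P r := hcdef ▸ hPmono (Set.mem_Ici.mpr hr₀)
      (Set.mem_Ici.mpr (le_trans hr₀ hr)) hr
    have hsq : c ≤ (deriv W r) ^ 2 := by
      have h0 : 0 ≤ K * ((1 - (W r) ^ 2) ^ 2 / (Real.cosh r) ^ 2) := by positivity
      simp only [hP] at hPr
      linarith
    calc Real.sqrt c ≤ Real.sqrt ((deriv W r) ^ 2) := Real.sqrt_le_sqrt hsq
      _ = |deriv W r| := Real.sqrt_sq_eq_abs _
  set r₁ : ℝ := r₀ + 3 / Real.sqrt c with hr₁def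
  clear_value r₁
  have hr₁ : r₀ < r₁ := by
    have : 0 < 3 / Real.sqrt c := by positivity
    linarith [hr₁def]
  have hr₁0 : 0 ≤ r₁ := le_trans hr₀ (le_of_lt hr₁)
  have hdercont : ContinuousOn (deriv W) (Set.Icc r₀ r₁) := hW1d.continuous.continuousOn
  -- deriv W never 0 on [r₀, r₁]
  have hnz : ∀ r ∈ Set.Icc r₀ r₁, deriv W r ≠ 0 := by
    intro r hr h0
    have := hbig r hr.1
    rw [h0, abs_zero] at this
    linarith
  have hW0 : deriv W r₀ ≠ 0 := hnz r₀ (Set.mem_Icc.mpr ⟨le_refl _, le_of_lt hr₁⟩)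
  have key : ∀ r ∈ Set.Icc r₀ r₁,
      (0 < deriv W r₀ → Real.sqrt c ≤ deriv W r) ∧
      (deriv W r₀ < 0 → deriv W r ≤ -Real.sqrt c) := by
    intro r hr
    have habs := hbig r hr.1
    rcases abs_cases (deriv W r) with ⟨heq, _⟩ | ⟨heq, _⟩
    · -- deriv W r ≥ √c > 0
      have hpos : Real.sqrt c ≤ deriv W r := by rw [heq] at habs; linarith
      constructor
      · intro _; exact hpos
      · intro hneg
        -- deriv W r₀ < 0 but deriv W r > 0 : IVT gives a zero
        exfalso
        have hsub : Set.Icc (deriv W r₀) (deriv W r) ⊆ deriv W '' (Set.Icc r₀ r) :=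
          intermediate_value_Icc hr.1 (hdercont.mono (Set.Icc_subset_Icc_right hr.2))
        have h0mem : (0:ℝ) ∈ Set.Icc (deriv W r₀) (deriv W r) :=
          Set.mem_Icc.mpr ⟨le_of_lt hneg, by linarith⟩
        obtain ⟨x, hx, hx0⟩ := hsub h0mem
        exact hnz x (Set.Icc_subset_Icc_right hr.2 hx) hx0
    · have hneg : deriv W r ≤ -Real.sqrt c := by rw [heq] at habs; linarith
      constructor
      · intro hpos
        exfalso
        have hsub : Set.Icc (deriv W r) (deriv W r₀) ⊆ deriv W '' (Set.Icc r₀ r) :=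
          intermediate_value_Icc' hr.1 (hdercont.mono (Set.Icc_subset_Icc_right hr.2))
        have h0mem : (0:ℝ) ∈ Set.Icc (deriv W r) (deriv W r₀) :=
          Set.mem_Icc.mpr ⟨by linarith, le_of_lt hpos⟩
        obtain ⟨x, hx, hx0⟩ := hsub h0mem
        exact hnz x (Set.Icc_subset_Icc_right hr.2 hx) hx0
      · intro _; exact hneg
  have hdist : Real.sqrt c * (r₁ - r₀) = 3 := by
    rw [hr₁def]
    field_simp
    ring
  have hWr₀ := hstrip r₀ hr₀
  have hWr₁ := hstrip r₁ hr₁0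
  rw [abs_lt] at hWr₀ hWr₁
  rcases lt_or_gt_of_ne hW0 with hneg | hpos
  · -- deriv W ≤ -√c on [r₀,r₁] ; W decreases by ≥ 3
    have hmono : AntitoneOn (fun r => W r + Real.sqrt c * r) (Set.Icc r₀ r₁) := by
      apply antitoneOn_of_deriv_nonpos (convex_Icc r₀ r₁)
      · exact ((hWd.continuous).add (continuous_const.mul continuous_id)).continuousOn
      · exact (hWd.add ((differentiable_const _).mul differentiable_id)).differentiableOn
      · intro x hx
        rw [interior_Icc] at hx
        have hx' : x ∈ Set.Icc r₀ r₁ := Set.Ioo_subset_Icc_self hx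
        have hd : HasDerivAt (fun r => W r + Real.sqrt c * r)
            (deriv W x + Real.sqrt c) x := by
          have := ((hWd x).hasDerivAt).add ((hasDerivAt_id x).const_mul (Real.sqrt c))
          exact this.congr_deriv (by ring)
        rw [hd.deriv]
        have := (key x hx').2 hneg
        linarith
    have := hmono (Set.mem_Icc.mpr ⟨le_refl _, le_of_lt hr₁⟩)
      (Set.mem_Icc.mpr ⟨le_of_lt hr₁, le_refl _⟩) (le_of_lt hr₁)
    simp only at this
    have : W r₁ ≤ W r₀ - 3 := by nlinarith [hdist]
    linarith
  · have hmono : MonotoneOn (fun r => W r - Real.sqrt c * r) (Set.Icc r₀ r₁) := by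
      apply monotoneOn_of_deriv_nonneg (convex_Icc r₀ r₁)
      · exact ((hWd.continuous).sub (continuous_const.mul continuous_id)).continuousOn
      · exact (hWd.sub ((differentiable_const _).mul differentiable_id)).differentiableOn
      · intro x hx
        rw [interior_Icc] at hx
        have hx' : x ∈ Set.Icc r₀ r₁ := Set.Ioo_subset_Icc_self hx
        have hd : HasDerivAt (fun r => W r - Real.sqrt c * r)
            (deriv W x - Real.sqrt c) x := by
          have := ((hWd x).hasDerivAt).sub ((hasDerivAt_id x).const_mul (Real.sqrt c))
          exact this.congr_deriv (by ring)
        rw [hd.deriv]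
        have := (key x hx').1 hpos
        linarith
    have := hmono (Set.mem_Icc.mpr ⟨le_refl _, le_of_lt hr₁⟩)
      (Set.mem_Icc.mpr ⟨le_of_lt hr₁, le_refl _⟩) (le_of_lt hr₁)
    simp only at this
    have : W r₀ + 3 ≤ W r₁ := by nlinarith [hdist]
    linarith

/-- A solution of the static equation staying in the strip `|W| < 1` for all
`r ≥ 0` satisfies `Q(r) ≤ 0` for all `r ≥ 0`; indeed if `Q(r₀) > 0` at some
`r₀ ≥ 0` then `|W(r₁)| = 1` at some `r₁ > r₀`, a contradiction. -/
theorem Q_nonpos_in_strip (ℓ : ℝ) (hℓ : 0 < ℓ) (W : ℝ → ℝ)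
    (hW : ContDiff ℝ 2 W)
    (hODE : ∀ r : ℝ, deriv (deriv W) r
      + ℓ * (ℓ + 1) / (Real.cosh r) ^ 2 * W r * (1 - (W r) ^ 2) = 0)
    (Q : ℝ → ℝ)
    (hQ : ∀ r : ℝ, Q r = (Real.cosh r) ^ 2 * (deriv W r) ^ 2
      - ℓ * (ℓ + 1) / 2 * (1 - (W r) ^ 2) ^ 2)
    (hstrip : ∀ r : ℝ, 0 ≤ r → |W r| < 1) :
    (∀ r₀ : ℝ, 0 ≤ r₀ → 0 < Q r₀ → ∃ r₁ : ℝ, r₀ < r₁ ∧ |W r₁| = 1)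
      ∧ (∀ r : ℝ, 0 ≤ r → Q r ≤ 0) := by
  constructor
  · intro r₀ hr₀ hQpos
    exact absurd (Q_pos_absurd ℓ hℓ W hW hODE Q hQ hstrip r₀ hr₀ hQpos) (by simp)
  · intro r hr
    by_contra h
    push_neg at h
    exact Q_pos_absurd ℓ hℓ W hW hODE Q hQ hstrip r hr h
end

section
/- For an odd solution of the static equation staying in |W| < 1 for all r, the initial slope b = W'(0) satisfies 2b² < ℓ(ℓ+1). -/
/-- For an odd solution of the static equation staying in `|W| < 1` for all
`r ≥ 0`, the initial slope `b = W'(0)` satisfies `2b² < ℓ(ℓ+1)`. -/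
theorem slope_bound (ℓ : ℝ) (hℓ : 0 < ℓ) (W : ℝ → ℝ)
    (hW : ContDiff ℝ 2 W)
    (hODE : ∀ r : ℝ, deriv (deriv W) r
      + ℓ * (ℓ + 1) / (Real.cosh r) ^ 2 * W r * (1 - (W r) ^ 2) = 0)
    (b : ℝ) (hb : 0 < b) (hW0 : W 0 = 0) (hW0' : deriv W 0 = b)
    (hstrip : ∀ r : ℝ, 0 ≤ r → |W r| < 1) :
    2 * b ^ 2 < ℓ * (ℓ + 1) := by
  by_contra hcon
  push_neg at hcon
  set k : ℝ := ℓ * (ℓ + 1) with hk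
  have hkpos : 0 < k := by positivity
  -- differentiability facts
  have hWd : Differentiable ℝ W := hW.differentiable (by norm_num)
  have hW1 : ContDiff ℝ 1 (deriv W) := by
    have := (contDiff_succ_iff_deriv (n := 1)).mp (by exact_mod_cast hW)
    exact this.2.2
  have hWd' : Differentiable ℝ (deriv W) := hW1.differentiable (by norm_num)
  -- the functional R = Q / cosh²
  set R : ℝ → ℝ := fun r => (deriv W r) ^ 2
      - k / 2 * (1 - (W r) ^ 2) ^ 2 / (Real.cosh r) ^ 2 with hR
  have hcosh : ∀ r : ℝ, (Real.cosh r) ^ 2 ≠ 0 := fun r => by positivity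
  have hRderiv : ∀ r : ℝ, HasDerivAt R
      (k * (1 - (W r) ^ 2) ^ 2 * Real.sinh r / (Real.cosh r) ^ 3) r := by
    intro r
    have h1 : HasDerivAt (fun r => (deriv W r) ^ 2)
        (2 * deriv W r * deriv (deriv W) r) r := by
      simpa [mul_comm] using ((hWd' r).hasDerivAt.fun_pow 2)
    have hWr : HasDerivAt W (deriv W r) r := (hWd r).hasDerivAt
    have h2 : HasDerivAt (fun r => k / 2 * (1 - (W r) ^ 2) ^ 2)
        (k / 2 * (2 * (1 - (W r) ^ 2) * (-(2 * W r * deriv W r)))) r := by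
      have : HasDerivAt (fun r => (1 - (W r) ^ 2))
          (-(2 * W r * deriv W r)) r := by
        simpa [mul_comm] using ((hWr.pow 2).const_sub 1)
      simpa [mul_comm, mul_assoc] using ((this.pow 2).const_mul (k / 2))
    have h3 : HasDerivAt (fun r => (Real.cosh r) ^ 2)
        (2 * Real.cosh r * Real.sinh r) r := by
      simpa [mul_comm] using ((Real.hasDerivAt_cosh r).fun_pow 2)
    have h4 : HasDerivAt R _ r := h1.fun_sub ((h2.fun_div h3 (hcosh r)))
    convert h4 using 1
    have hode := hODE r
    have hdd : deriv (deriv W) r = -(k / (Real.cosh r) ^ 2 * W r * (1 - (W r) ^ 2)) := by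
      linarith
    rw [hdd]
    field_simp
    ring
  have hRdiff : Differentiable ℝ R := fun r => (hRderiv r).differentiableAt
  have hRcont : Continuous R := hRdiff.continuous
  have hWsqlt : ∀ r : ℝ, 0 ≤ r → (W r) ^ 2 < 1 := by
    intro r hr
    have h1 := abs_lt.mp (hstrip r hr)
    nlinarith
  -- R is strictly monotone on [0,∞)
  have hmono : StrictMonoOn R (Set.Ici (0:ℝ)) := by
    apply strictMonoOn_of_deriv_pos (convex_Ici 0) hRcont.continuousOn
    intro x hx
    rw [interior_Ici] at hx
    rw [(hRderiv x).deriv]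
    have h2 := hWsqlt x (le_of_lt hx)
    have h3 : 0 < Real.sinh x := Real.sinh_pos_iff.mpr hx
    have h4 : 0 < Real.cosh x := Real.cosh_pos x
    have h5 : 0 < 1 - (W x) ^ 2 := by linarith
    positivity
  have hR0 : R 0 = b ^ 2 - k / 2 := by
    simp [hR, hW0, hW0', Real.cosh_zero]
  have hR0nn : 0 ≤ R 0 := by rw [hR0]; nlinarith
  have hRnn : ∀ r : ℝ, 0 ≤ r → 0 ≤ R r := by
    intro r hr
    rcases eq_or_lt_of_le hr with h | h
    · rw [← h]; exact hR0nn
    · exact hR0nn.trans (hmono Set.self_mem_Ici (le_of_lt h) h).le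
  -- R 1 > 0
  have hR1 : 0 < R 1 :=
    lt_of_le_of_lt hR0nn (hmono Set.self_mem_Ici (by norm_num) (by norm_num))
  -- deriv W is positive on [0,∞)
  have hWne : ∀ r : ℝ, 0 ≤ r → deriv W r ≠ 0 := by
    intro r hr h0
    have h2 := hWsqlt r hr
    have h4 : 0 < Real.cosh r := Real.cosh_pos r
    have h5 : 0 < 1 - (W r) ^ 2 := by linarith
    have h6 : 0 < k / 2 * (1 - (W r) ^ 2) ^ 2 / (Real.cosh r) ^ 2 := by positivity
    have h7 := hRnn r hr
    rw [hR] at h7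
    simp only at h7
    rw [h0] at h7
    nlinarith
  have hWpos : ∀ r : ℝ, 0 ≤ r → 0 < deriv W r := by
    intro r hr
    by_contra hneg
    push_neg at hneg
    have hlt : deriv W r < 0 := lt_of_le_of_ne hneg (hWne r hr)
    -- IVT on [0, r]
    have hcontd : ContinuousOn (deriv W) (Set.Icc 0 r) := hWd'.continuous.continuousOn
    have : (0:ℝ) ∈ Set.Icc (deriv W r) (deriv W 0) := by
      constructor <;> [linarith; (rw [hW0']; linarith)]
    obtain ⟨c, hc, hc0⟩ := intermediate_value_Icc' (by linarith : (0:ℝ) ≤ r) hcontd this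
    exact hWne c hc.1 hc0
  -- on [1,∞), deriv W ≥ √(R 1)
  set c : ℝ := Real.sqrt (R 1) with hc
  have hcpos : 0 < c := Real.sqrt_pos.mpr hR1
  have hWge : ∀ r : ℝ, 1 ≤ r → c ≤ deriv W r := by
    intro r hr
    have hr0 : (0:ℝ) ≤ r := by linarith
    have h1 : R 1 ≤ R r := by
      rcases eq_or_lt_of_le hr with h | h
      · rw [h]
      · exact (hmono (by norm_num) hr0 h).le
    have h2 : R r ≤ (deriv W r) ^ 2 := by
      have h4 : 0 < Real.cosh r := Real.cosh_pos r
      have : 0 ≤ k / 2 * (1 - (W r) ^ 2) ^ 2 / (Real.cosh r) ^ 2 := by positivity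
      rw [hR]; simp only; linarith
    have h3 : 0 < deriv W r := hWpos r hr0
    have : c ^ 2 ≤ (deriv W r) ^ 2 := by
      rw [hc, Real.sq_sqrt hR1.le]; linarith
    nlinarith
  -- linear growth: W r ≥ W 1 + c (r - 1)
  have hgrow : ∀ r : ℝ, 1 ≤ r → W 1 + c * (r - 1) ≤ W r := by
    intro r hr
    set g : ℝ → ℝ := fun s => W s - c * s with hg
    have hg' : ∀ x : ℝ, HasDerivAt g (deriv W x - c) x := by
      intro x
      simpa using ((hWd x).hasDerivAt.fun_sub ((hasDerivAt_id x).const_mul c))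
    have hmg : MonotoneOn g (Set.Ici (1:ℝ)) := by
      apply monotoneOn_of_deriv_nonneg (convex_Ici 1)
        (hWd.continuous.sub (continuous_const.mul continuous_id)).continuousOn
      · intro x hx
        exact (hg' x).differentiableAt.differentiableWithinAt
      · intro x hx
        rw [interior_Ici] at hx
        show 0 ≤ deriv g x
        rw [(hg' x).deriv]
        have := hWge x hx.le
        linarith
    have := hmg Set.self_mem_Ici (by exact hr) hr
    rw [hg] at this
    simp only at this
    linarith
  -- contradiction: take r = 1 + 3/c
  have hfin := hgrow (1 + 3 / c) (le_add_of_nonneg_right (by positivity))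
  have hW1b := abs_lt.mp (hstrip 1 (by norm_num))
  have : W (1 + 3 / c) ≥ W 1 + 3 := by
    have : c * (1 + 3 / c - 1) = 3 := by field_simp; ring
    linarith [hfin, this ▸ hfin]
  have hlast := abs_lt.mp (hstrip (1 + 3 / c) (by positivity))
  linarith
end

section
/- Any solution of the static equation with |W(r)| < 1 for all r ≥ 0 satisfies lim_{r→∞} e^r W'(r) = 0, and the limit W_∞ = lim_{r→∞} W(r) exists. -/
open Filter Real MeasureTheory Set intervalIntegral

lemma aux_not_pos_limit (W : ℝ → ℝ) (hdW : Differentiable ℝ W)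
    (hc : Continuous (deriv W)) (hb : ∀ r : ℝ, 0 ≤ r → |W r| < 1) {m : ℝ}
    (hm : Tendsto (deriv W) atTop (nhds m)) : ¬ 0 < m := by
  intro hpos
  have hev : ∀ᶠ r in atTop, m / 2 < deriv W r ∧ (0:ℝ) ≤ r :=
    (hm.eventually_const_lt (by linarith)).and (eventually_ge_atTop 0)
  obtain ⟨R, hR⟩ := eventually_atTop.mp hev
  have hR0 : (0:ℝ) ≤ R := (hR R le_rfl).2
  set b := R + 6 / m with hb'
  have hRb : R ≤ b := by
    have : 0 < 6 / m := by positivity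
    simp only [hb']; linarith
  have hI : ∫ x in R..b, (m / 2) ≤ ∫ x in R..b, deriv W x := by
    apply intervalIntegral.integral_mono_on hRb intervalIntegrable_const
      (hc.intervalIntegrable R b)
    intro x hx
    exact (hR x hx.1).1.le
  rw [intervalIntegral.integral_deriv_eq_sub (fun x _ => hdW x)
    (hc.intervalIntegrable R b)] at hI
  rw [intervalIntegral.integral_const, smul_eq_mul] at hI
  have hbm : (b - R) * (m / 2) = 3 := by
    field_simp [hb']
    rw [hb', add_sub_cancel_left, div_mul_cancel₀ _ hpos.ne']; norm_num
  rw [hbm] at hI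
  have h1 := abs_lt.mp (hb R hR0)
  have h2 := abs_lt.mp (hb b (hR0.trans hRb))
  linarith

/-- Any solution of the static equation with `|W(r)| < 1` for all `r ≥ 0`
satisfies `lim_{r→∞} e^r W'(r) = 0`, and the limit `W_∞ = lim_{r→∞} W(r)`
exists. -/
theorem asymptotics_in_strip (ℓ : ℝ) (hℓ : 0 < ℓ) (W : ℝ → ℝ)
    (hW : ContDiff ℝ 2 W)
    (hODE : ∀ r : ℝ, deriv (deriv W) r
      + ℓ * (ℓ + 1) / (Real.cosh r) ^ 2 * W r * (1 - (W r) ^ 2) = 0)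
    (hstrip : ∀ r : ℝ, 0 ≤ r → |W r| < 1) :
    Tendsto (fun r : ℝ => Real.exp r * deriv W r) atTop (nhds 0)
      ∧ ∃ Winf : ℝ, Tendsto W atTop (nhds Winf) := by
  set K := ℓ * (ℓ + 1) with hK
  have hKpos : 0 < K := by positivity
  -- regularity facts
  have hdW : Differentiable ℝ W := hW.differentiable (by norm_num)
  have hW1 : ContDiff ℝ 1 (deriv W) := by
    have := (contDiff_succ_iff_deriv (n := 1)).mp (by exact_mod_cast hW)
    exact this.2.2
  have hdW2 : Differentiable ℝ (deriv W) := hW1.differentiable (by norm_num)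
  have hcW'' : Continuous (deriv (deriv W)) := hW1.continuous_deriv le_rfl
  have hcW' : Continuous (deriv W) := hdW2.continuous
  -- rewrite the ODE
  have hW''eq : ∀ r : ℝ, deriv (deriv W) r
      = -(K / Real.cosh r ^ 2 * W r * (1 - W r ^ 2)) := fun r => by
    have := hODE r; linarith
  have hcosh : ∀ r : ℝ, Real.exp r / 2 ≤ Real.cosh r := fun r => by
    rw [Real.cosh_eq]; have := (Real.exp_pos (-r)).le; linarith
  -- the key bound on W''
  have hbound : ∀ r : ℝ, 0 ≤ r →
      |deriv (deriv W) r| ≤ 4 * K * Real.exp (-2 * r) := by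
    intro r hr
    rw [hW''eq, abs_neg, abs_mul, abs_mul]
    have h1 : |W r| ≤ 1 := (hstrip r hr).le
    have hsq : W r ^ 2 ≤ 1 := by
      have := sq_abs (W r); nlinarith [abs_nonneg (W r)]
    have h2 : |1 - W r ^ 2| ≤ 1 := by
      rw [abs_of_nonneg (by linarith)]; nlinarith [sq_nonneg (W r)]
    have hcp : (0 : ℝ) < Real.cosh r := Real.cosh_pos r
    have habs : |K / Real.cosh r ^ 2| = K / Real.cosh r ^ 2 :=
      abs_of_nonneg (by positivity)
    rw [habs]
    have h3 : K / Real.cosh r ^ 2 ≤ 4 * K * Real.exp (-2 * r) := by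
      rw [div_le_iff₀ (by positivity)]
      have hc := hcosh r
      have hexp : Real.exp (-2 * r) * Real.exp r ^ 2 = 1 := by
        rw [sq, ← Real.exp_add, ← Real.exp_add,
          show -2 * r + (r + r) = (0:ℝ) by ring, Real.exp_zero]
      have hc2 : Real.exp r ^ 2 / 4 ≤ Real.cosh r ^ 2 := by
        nlinarith [Real.exp_pos r]
      nlinarith [mul_le_mul_of_nonneg_left hc2
        (by positivity : (0:ℝ) ≤ 4 * K * Real.exp (-2 * r))]
    have hnn : (0:ℝ) ≤ K / Real.cosh r ^ 2 := by positivity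
    calc K / Real.cosh r ^ 2 * |W r| * |1 - W r ^ 2|
        ≤ K / Real.cosh r ^ 2 * 1 * 1 :=
          mul_le_mul (mul_le_mul_of_nonneg_left h1 hnn) h2 (abs_nonneg _)
            (by positivity)
      _ = K / Real.cosh r ^ 2 := by ring
      _ ≤ 4 * K * Real.exp (-2 * r) := h3
  -- integrability of W'' on Ioi a for a ≥ 0
  have hint : ∀ a : ℝ, 0 ≤ a → IntegrableOn (deriv (deriv W)) (Ioi a) := by
    intro a ha
    apply Integrable.mono'
      ((exp_neg_integrableOn_Ioi a (by norm_num : (0:ℝ) < 2)).const_mul (4 * K))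
      (hcW''.aestronglyMeasurable.restrict)
    filter_upwards [ae_restrict_mem measurableSet_Ioi] with x hx
    have := hbound x (ha.trans hx.le)
    simpa [Real.norm_eq_abs] using this
  -- FTC for W'
  have hFTC : ∀ a b : ℝ, ∫ x in a..b, deriv (deriv W) x = deriv W b - deriv W a :=
    fun a b => intervalIntegral.integral_deriv_eq_sub (fun x _ => hdW2 x)
      (hcW''.intervalIntegrable a b)
  -- W' converges at infinity
  have hm : Tendsto (deriv W) atTop
      (nhds ((∫ x in Ioi (0:ℝ), deriv (deriv W) x) + deriv W 0)) := by
    have h1 := intervalIntegral_tendsto_integral_Ioi 0 (hint 0 le_rfl) tendsto_id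
    simp only [hFTC] at h1
    have h2 := h1.add_const (deriv W 0)
    simpa using h2
  -- the limit must be 0
  have hlim0 : (∫ x in Ioi (0:ℝ), deriv (deriv W) x) + deriv W 0 = 0 := by
    set m := (∫ x in Ioi (0:ℝ), deriv (deriv W) x) + deriv W 0 with hmdef
    by_contra hne
    rcases lt_or_gt_of_ne hne with hneg | hpos
    · apply aux_not_pos_limit (fun x => -W x) hdW.neg (by
        rw [show deriv (fun x => -W x) = fun x => -deriv W x from funext fun x => deriv.neg]; exact hcW'.neg) (fun r hr => by simpa using hstrip r hr)
        (m := -m) _ (by linarith)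
      have : deriv (fun x => -W x) = fun x => -(deriv W x) := by
        funext x; simp [deriv.neg]
      rw [this]
      exact hm.neg
    · exact aux_not_pos_limit W hdW hcW' hstrip hm hpos
  rw [hlim0] at hm
  -- integral representation of W'
  have hW'rep : ∀ r : ℝ, 0 ≤ r →
      deriv W r = -∫ x in Ioi r, deriv (deriv W) x := by
    intro r hr
    have h1 := intervalIntegral_tendsto_integral_Ioi r (hint r hr) tendsto_id
    simp only [hFTC] at h1
    have h2 : Tendsto (fun b => deriv W b - deriv W r) atTop
        (nhds (0 - deriv W r)) := hm.sub_const _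
    have := tendsto_nhds_unique h1 h2
    linarith
  -- computing the exponential integral
  have hIexp : ∀ r : ℝ, ∫ x in Ioi r, Real.exp (-2 * x) = Real.exp (-2 * r) / 2 := by
    intro r
    have hd : ∀ x ∈ Ici r, HasDerivAt (fun y => -Real.exp (-2 * y) / 2)
        (Real.exp (-2 * x)) x := by
      intro x _
      have h0 : HasDerivAt (fun y : ℝ => -2 * y) (-2) x := by
        simpa using (hasDerivAt_id x).const_mul (-2)
      have h2 := (Real.hasDerivAt_exp (-2 * x)).comp x h0
      have h3 := (h2.neg).div_const 2
      exact h3.congr_deriv (by ring)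
    have htop : Tendsto (fun y => -Real.exp (-2 * y) / 2) atTop (nhds 0) := by
      have h1 : Tendsto (fun y : ℝ => -2 * y) atTop atBot :=
        tendsto_id.const_mul_atTop_of_neg (by norm_num)
      have h2 := Real.tendsto_exp_atBot.comp h1
      have h3 := (h2.neg).div_const 2
      simpa using h3
    rw [integral_Ioi_of_hasDerivAt_of_tendsto' hd
      (exp_neg_integrableOn_Ioi r (by norm_num : (0:ℝ) < 2)) htop]
    ring
  -- decay of W'
  have hW'bd : ∀ r : ℝ, 0 ≤ r → |deriv W r| ≤ 2 * K * Real.exp (-2 * r) := by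
    intro r hr
    rw [hW'rep r hr, abs_neg]
    have h1 : |∫ x in Ioi r, deriv (deriv W) x|
        ≤ ∫ x in Ioi r, 4 * K * Real.exp (-2 * x) := by
      rw [← Real.norm_eq_abs]
      apply MeasureTheory.norm_integral_le_of_norm_le
        ((exp_neg_integrableOn_Ioi r (by norm_num : (0:ℝ) < 2)).const_mul (4 * K))
      filter_upwards [ae_restrict_mem measurableSet_Ioi] with x hx
      simpa [Real.norm_eq_abs] using hbound x (hr.trans hx.le)
    have h2 : ∫ x in Ioi r, 4 * K * Real.exp (-2 * x)
        = 2 * K * Real.exp (-2 * r) := by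
      rw [MeasureTheory.integral_const_mul, hIexp]; ring
    linarith [h1, h2.le]
  constructor
  · -- e^r W' → 0
    have hg : Tendsto (fun r : ℝ => 2 * K * Real.exp (-r)) atTop (nhds 0) := by
      have := (Real.tendsto_exp_neg_atTop_nhds_zero).const_mul (2 * K)
      simpa using this
    have hsq : Tendsto (fun r : ℝ => |Real.exp r * deriv W r|) atTop (nhds 0) := by
      apply squeeze_zero' (Eventually.of_forall fun r => abs_nonneg _) _ hg
      filter_upwards [eventually_ge_atTop (0:ℝ)] with r hr
      have h1 := hW'bd r hr
      have h2 : |Real.exp r * deriv W r| = Real.exp r * |deriv W r| := by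
        rw [abs_mul, abs_of_nonneg (Real.exp_pos r).le]
      rw [h2]
      calc Real.exp r * |deriv W r| ≤ Real.exp r * (2 * K * Real.exp (-2 * r)) :=
            mul_le_mul_of_nonneg_left h1 (Real.exp_pos r).le
        _ = 2 * K * Real.exp (-r) := by
            rw [show (2 : ℝ) * K * Real.exp (-2 * r) = 2 * K * Real.exp (-2 * r) from rfl,
              mul_comm (Real.exp r), mul_assoc, ← Real.exp_add,
              show -2 * r + r = -r by ring]
    exact (tendsto_zero_iff_abs_tendsto_zero _).mpr hsq
  · -- W converges
    have hintW' : IntegrableOn (deriv W) (Ioi 0) := by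
      apply Integrable.mono'
        ((exp_neg_integrableOn_Ioi 0 (by norm_num : (0:ℝ) < 2)).const_mul (2 * K))
        (hcW'.aestronglyMeasurable.restrict)
      filter_upwards [ae_restrict_mem measurableSet_Ioi] with x hx
      simpa [Real.norm_eq_abs] using hW'bd x hx.le
    have h1 := intervalIntegral_tendsto_integral_Ioi 0 hintW' tendsto_id
    have hFTCW : ∀ b : ℝ, ∫ x in (0:ℝ)..b, deriv W x = W b - W 0 :=
      fun b => intervalIntegral.integral_deriv_eq_sub (fun x _ => hdW x)
        (hcW'.intervalIntegrable 0 b)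
    simp only [hFTCW] at h1
    refine ⟨(∫ x in Ioi (0:ℝ), deriv W x) + W 0, ?_⟩
    have h2 := h1.add_const (W 0)
    simpa using h2
end

section
/- Every static solution W with W' → 0 fast enough at ±∞ satisfies ∫_{-∞}^{∞} tanh r · sech²r · (1 − W(r)²)² dr = 0. -/
open Filter MeasureTheory

/-- Every static solution with `W' → 0` at `±∞` satisfies
`∫ tanh r · sech²r · (1 − W²)² dr = 0`. -/
theorem odd_weight_identity (ℓ : ℝ) (hℓ : 0 < ℓ) (W : ℝ → ℝ)
    (hW : ContDiff ℝ 2 W)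
    (hODE : ∀ r : ℝ, deriv (deriv W) r
      + ℓ * (ℓ + 1) / (Real.cosh r) ^ 2 * W r * (1 - (W r) ^ 2) = 0)
    (hbdd : ∃ C : ℝ, ∀ r : ℝ, |W r| ≤ C)
    (hW'sq : Integrable (fun r : ℝ => (deriv W r) ^ 2))
    (hint : Integrable (fun r : ℝ =>
      Real.tanh r / (Real.cosh r) ^ 2 * (1 - (W r) ^ 2) ^ 2))
    (hdecayTop : Tendsto (deriv W) atTop (nhds 0))
    (hdecayBot : Tendsto (deriv W) atBot (nhds 0)) :
    ∫ r : ℝ, Real.tanh r / (Real.cosh r) ^ 2 * (1 - (W r) ^ 2) ^ 2 = 0 := by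
  obtain ⟨C, hC⟩ := hbdd
  set g : ℝ → ℝ := fun r =>
    (deriv W r) ^ 2 / (ℓ * (ℓ + 1)) - (1 - (W r) ^ 2) ^ 2 / (2 * (Real.cosh r) ^ 2)
  have hℓ1 : ℓ * (ℓ + 1) ≠ 0 := by positivity
  -- derivative of g
  have hderiv : ∀ r : ℝ, HasDerivAt g
      (Real.tanh r / (Real.cosh r) ^ 2 * (1 - (W r) ^ 2) ^ 2) r := by
    intro r
    have hW1 : HasDerivAt W (deriv W r) r :=
      (hW.differentiable two_ne_zero r).hasDerivAt
    have hW2 : HasDerivAt (deriv W) (deriv (deriv W) r) r := by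
      have : Differentiable ℝ (deriv W) :=
        (hW.iterate_deriv' 1 1).differentiable (by norm_num)
      exact (this r).hasDerivAt
    have hcosh : HasDerivAt Real.cosh (Real.sinh r) r := Real.hasDerivAt_cosh r
    have hcoshne : Real.cosh r ≠ 0 := (Real.cosh_pos r).ne'
    have h1 : HasDerivAt (fun r => (deriv W r) ^ 2 / (ℓ * (ℓ + 1)))
        (2 * deriv W r * deriv (deriv W) r / (ℓ * (ℓ + 1))) r := by
      have := (hW2.pow 2).div_const (ℓ * (ℓ + 1))
      simpa [mul_comm, mul_assoc, mul_left_comm] using this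
    have h2 : HasDerivAt (fun r => (1 - (W r) ^ 2) ^ 2 / (2 * (Real.cosh r) ^ 2))
        ((2 * (1 - (W r) ^ 2) * (-(2 * W r * deriv W r)) * (2 * (Real.cosh r) ^ 2)
          - (1 - (W r) ^ 2) ^ 2 * (2 * (2 * Real.cosh r * Real.sinh r)))
          / (2 * (Real.cosh r) ^ 2) ^ 2) r := by
      have hnum : HasDerivAt (fun r => (1 - (W r) ^ 2) ^ 2)
          (2 * (1 - (W r) ^ 2) * (-(2 * W r * deriv W r))) r := by
        have := ((hasDerivAt_const r (1 : ℝ)).sub (hW1.pow 2)).pow 2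
        exact this.congr_deriv (by simp only [Pi.sub_apply, Pi.pow_apply]; push_cast; ring)
      have hden : HasDerivAt (fun r => 2 * (Real.cosh r) ^ 2)
          (2 * (2 * Real.cosh r * Real.sinh r)) r := by
        have := (hcosh.pow 2).const_mul (2 : ℝ)
        simpa [mul_comm, mul_assoc, mul_left_comm] using this
      exact hnum.div hden (by positivity)
    have h := h1.sub h2
    have hode := hODE r
    have hW2' : deriv (deriv W) r
        = -(ℓ * (ℓ + 1) / (Real.cosh r) ^ 2 * W r * (1 - (W r) ^ 2)) := by
      linarith
    refine h.congr_deriv ?_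
    rw [hW2', Real.tanh_eq_sinh_div_cosh]
    field_simp
    ring
  have hzero : Tendsto g atTop (nhds 0) ∧ Tendsto g atBot (nhds 0) := by
    have hb : ∀ r : ℝ, (1 - (W r) ^ 2) ^ 2 ≤ (1 + C ^ 2) ^ 2 := by
      intro r
      have h1 : |1 - (W r) ^ 2| ≤ 1 + C ^ 2 := by
        have := hC r
        have h2 : (W r) ^ 2 ≤ C ^ 2 := by
          have := sq_abs (W r) ▸ pow_le_pow_left₀ (abs_nonneg _) this 2
          simpa [sq_abs] using this
        rw [abs_le]
        constructor <;> nlinarith [sq_nonneg (W r)]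
      calc (1 - (W r) ^ 2) ^ 2 = |1 - (W r) ^ 2| ^ 2 := (sq_abs _).symm
        _ ≤ (1 + C ^ 2) ^ 2 := by
            apply pow_le_pow_left₀ (abs_nonneg _) h1
    have key : ∀ l : Filter ℝ, Tendsto (deriv W) l (nhds 0) →
        Tendsto Real.cosh l atTop → Tendsto g l (nhds 0) := by
      intro l hd hc
      have t1 : Tendsto (fun r => (deriv W r) ^ 2 / (ℓ * (ℓ + 1))) l (nhds 0) := by
        have := (hd.pow 2).div_const (ℓ * (ℓ + 1))
        simpa using this
      have t2 : Tendsto (fun r => (1 - (W r) ^ 2) ^ 2 / (2 * (Real.cosh r) ^ 2)) l (nhds 0) := by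
        have hc2 : Tendsto (fun r => 2 * (Real.cosh r) ^ 2) l atTop := by
          apply Tendsto.const_mul_atTop (by norm_num : (0:ℝ) < 2)
          exact hc.atTop_mul_atTop₀ hc |>.congr (by intro x; ring)
        have hup : Tendsto (fun r => (1 + C ^ 2) ^ 2 / (2 * (Real.cosh r) ^ 2)) l (nhds 0) :=
          Tendsto.div_atTop tendsto_const_nhds hc2
        apply squeeze_zero (fun r => by positivity) (fun r => ?_) hup
        apply div_le_div_of_nonneg_right (hb r) ?_ |>.trans_eq rfl
        · positivity
      simpa using t1.sub t2
    have hctop : Tendsto Real.cosh atTop atTop := by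
      apply tendsto_atTop_mono (fun x => ?_)
        (Real.tendsto_exp_atTop.atTop_div_const (by norm_num : (0:ℝ) < 2))
      rw [Real.cosh_eq]
      have := (Real.exp_pos (-x)).le
      linarith
    have hcbot : Tendsto Real.cosh atBot atTop := by
      have h1 : Tendsto (fun x : ℝ => Real.exp (-x) / 2) atBot atTop :=
        (Real.tendsto_exp_atTop.comp tendsto_neg_atBot_atTop).atTop_div_const
          (by norm_num : (0:ℝ) < 2)
      apply tendsto_atTop_mono (fun x => ?_) h1
      rw [Real.cosh_eq]
      have := (Real.exp_pos x).le
      linarith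
    refine ⟨key atTop hdecayTop hctop, key atBot hdecayBot hcbot⟩
  have := integral_of_hasDerivAt_of_tendsto hderiv hint hzero.2 hzero.1
  simpa using this
end

section
/- For a smooth solution of the hyperboloidal equation on [−1,1], the Bondi energy 𝓔(τ) = ∫_{−1}^1 ρ dx satisfies d𝓔/dτ = −(∂τW(τ,−1))² − (∂τW(τ,1))²; in particular 𝓔 is nonincreasing. -/
/-- `∂τ` of a function of `(τ,x)`. -/
noncomputable def pdTau (W : ℝ → ℝ → ℝ) (τ x : ℝ) : ℝ :=
  deriv (fun s => W s x) τ

/-- `∂x` of a function of `(τ,x)`. -/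
noncomputable def pdX (W : ℝ → ℝ → ℝ) (τ x : ℝ) : ℝ :=
  deriv (fun y => W τ y) x

/-- Energy density `ρ` for the hyperboloidal Yang-Mills equation. -/
noncomputable def energyDensity (ℓ : ℝ) (W : ℝ → ℝ → ℝ) (τ x : ℝ) : ℝ :=
  (1 / 2) * ((pdTau W τ x) ^ 2 + (1 - x ^ 2) * (pdX W τ x) ^ 2
    + ℓ * (ℓ + 1) / 2 * (1 - (W τ x) ^ 2) ^ 2)

/-- Bondi-type energy `𝓔(τ) = ∫_{−1}^1 ρ dx`. -/
noncomputable def bondiEnergy (ℓ : ℝ) (W : ℝ → ℝ → ℝ) (τ : ℝ) : ℝ :=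
  ∫ x in (-1 : ℝ)..1, energyDensity ℓ W τ x

open Function Set MeasureTheory intervalIntegral

/-! ### Auxiliary partial-derivative machinery -/

/-- `∂τW` as a two-variable (uncurried) function. -/
noncomputable def pA (W : ℝ → ℝ → ℝ) (p : ℝ × ℝ) : ℝ :=
  fderiv ℝ (Function.uncurry W) p (1, 0)

/-- `∂xW` as a two-variable (uncurried) function. -/
noncomputable def pB (W : ℝ → ℝ → ℝ) (p : ℝ × ℝ) : ℝ :=
  fderiv ℝ (Function.uncurry W) p (0, 1)

/-- `∂ττW`. -/
noncomputable def pAA (W : ℝ → ℝ → ℝ) (p : ℝ × ℝ) : ℝ :=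
  fderiv ℝ (pA W) p (1, 0)

/-- `∂x∂τW`. -/
noncomputable def pAB (W : ℝ → ℝ → ℝ) (p : ℝ × ℝ) : ℝ :=
  fderiv ℝ (pA W) p (0, 1)

/-- `∂x∂xW`. -/
noncomputable def pBB (W : ℝ → ℝ → ℝ) (p : ℝ × ℝ) : ℝ :=
  fderiv ℝ (pB W) p (0, 1)

/-- `∂τρ` as a two-variable function. -/
noncomputable def Gfun (ℓ : ℝ) (W : ℝ → ℝ → ℝ) (p : ℝ × ℝ) : ℝ :=
  pA W p * pAA W p + (1 - p.2 ^ 2) * pB W p * pAB W p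
    - ℓ * (ℓ + 1) * W p.1 p.2 * pA W p * (1 - (W p.1 p.2) ^ 2)

lemma hasDerivAt_fst' {g : ℝ × ℝ → ℝ} (hg : Differentiable ℝ g) (τ x : ℝ) :
    HasDerivAt (fun s => g (s, x)) (fderiv ℝ g (τ, x) (1, 0)) τ := by
  have h := (hg (τ, x)).hasFDerivAt
  have hc : HasDerivAt (fun s : ℝ => (s, x)) ((1 : ℝ), (0 : ℝ)) τ :=
    (hasDerivAt_id τ).prodMk (hasDerivAt_const τ x)
  exact h.comp_hasDerivAt τ hc

lemma hasDerivAt_snd' {g : ℝ × ℝ → ℝ} (hg : Differentiable ℝ g) (τ x : ℝ) :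
    HasDerivAt (fun y => g (τ, y)) (fderiv ℝ g (τ, x) (0, 1)) x := by
  have h := (hg (τ, x)).hasFDerivAt
  have hc : HasDerivAt (fun y : ℝ => (τ, y)) ((0 : ℝ), (1 : ℝ)) x :=
    (hasDerivAt_const x τ).prodMk (hasDerivAt_id x)
  exact h.comp_hasDerivAt x hc

section aux

variable {W : ℝ → ℝ → ℝ} (hW : ContDiff ℝ 2 (Function.uncurry W))

include hW

lemma diffW : Differentiable ℝ (Function.uncurry W) :=
  hW.differentiable (by norm_num)

lemma contDiff_pA : ContDiff ℝ 1 (pA W) :=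
  (hW.fderiv_right (by norm_num)).clm_apply contDiff_const

lemma contDiff_pB : ContDiff ℝ 1 (pB W) :=
  (hW.fderiv_right (by norm_num)).clm_apply contDiff_const

lemma diff_pA : Differentiable ℝ (pA W) :=
  (contDiff_pA hW).differentiable one_ne_zero

lemma diff_pB : Differentiable ℝ (pB W) :=
  (contDiff_pB hW).differentiable one_ne_zero

lemma hasDerivAt_tau (τ x : ℝ) :
    HasDerivAt (fun s => W s x) (pA W (τ, x)) τ :=
  hasDerivAt_fst' (diffW hW) τ x

lemma hasDerivAt_x (τ x : ℝ) :
    HasDerivAt (fun y => W τ y) (pB W (τ, x)) x :=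
  hasDerivAt_snd' (diffW hW) τ x

lemma pdTau_eq (τ x : ℝ) : pdTau W τ x = pA W (τ, x) :=
  (hasDerivAt_tau hW τ x).deriv

lemma pdX_eq (τ x : ℝ) : pdX W τ x = pB W (τ, x) :=
  (hasDerivAt_x hW τ x).deriv

/-- Symmetry of mixed second partial derivatives. -/
lemma mixed_symm (p : ℝ × ℝ) :
    fderiv ℝ (pA W) p (0, 1) = fderiv ℝ (pB W) p (1, 0) := by
  have hd : Differentiable ℝ (fderiv ℝ (Function.uncurry W)) :=
    (hW.fderiv_right (m := 1) (by norm_num)).differentiable one_ne_zero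
  have hA : fderiv ℝ (pA W) p =
      (fderiv ℝ (fderiv ℝ (Function.uncurry W)) p).flip ((1 : ℝ), (0 : ℝ)) := by
    unfold pA
    rw [fderiv_clm_apply (hd p) (differentiableAt_const _)]
    simp
  have hB : fderiv ℝ (pB W) p =
      (fderiv ℝ (fderiv ℝ (Function.uncurry W)) p).flip ((0 : ℝ), (1 : ℝ)) := by
    unfold pB
    rw [fderiv_clm_apply (hd p) (differentiableAt_const _)]
    simp
  have hsymm := second_derivative_symmetric
    (fun y => ((diffW hW) y).hasFDerivAt) ((hd p).hasFDerivAt)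
    ((0 : ℝ), (1 : ℝ)) ((1 : ℝ), (0 : ℝ))
  rw [hA, hB]
  simpa using hsymm

lemma cont_pAA : Continuous (pAA W) :=
  ((ContinuousLinearMap.apply ℝ ℝ ((1 : ℝ), (0 : ℝ))).continuous).comp
    ((contDiff_pA hW).continuous_fderiv one_ne_zero)

lemma cont_pAB : Continuous (pAB W) :=
  ((ContinuousLinearMap.apply ℝ ℝ ((0 : ℝ), (1 : ℝ))).continuous).comp
    ((contDiff_pA hW).continuous_fderiv one_ne_zero)

lemma cont_pBB : Continuous (pBB W) :=
  ((ContinuousLinearMap.apply ℝ ℝ ((0 : ℝ), (1 : ℝ))).continuous).comp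
    ((contDiff_pB hW).continuous_fderiv one_ne_zero)

lemma cont_uW : Continuous (fun p : ℝ × ℝ => W p.1 p.2) := by
  have := hW.continuous
  exact this

lemma cont_Gfun (ℓ : ℝ) : Continuous (Gfun ℓ W) := by
  unfold Gfun
  have h1 := (contDiff_pA hW).continuous
  have h2 := (contDiff_pB hW).continuous
  have h3 := cont_pAA hW
  have h4 := cont_pAB hW
  have h5 := cont_uW hW
  fun_prop

lemma cont_energyDensity (ℓ : ℝ) :
    Continuous (fun p : ℝ × ℝ => energyDensity ℓ W p.1 p.2) := by
  have heq : (fun p : ℝ × ℝ => energyDensity ℓ W p.1 p.2) =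
      fun p : ℝ × ℝ => (1 / 2) * ((pA W p) ^ 2 + (1 - p.2 ^ 2) * (pB W p) ^ 2
        + ℓ * (ℓ + 1) / 2 * (1 - (W p.1 p.2) ^ 2) ^ 2) := by
    funext p
    simp [energyDensity, pdTau_eq hW, pdX_eq hW]
  rw [heq]
  have h1 := (contDiff_pA hW).continuous
  have h2 := (contDiff_pB hW).continuous
  have h5 := cont_uW hW
  fun_prop

/-- time derivative of the energy density -/
lemma hasDerivAt_ED_tau (ℓ : ℝ) (t x : ℝ) :
    HasDerivAt (fun s => energyDensity ℓ W s x) (Gfun ℓ W (t, x)) t := by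
  have hA' : HasDerivAt (fun s => pA W (s, x)) (pAA W (t, x)) t :=
    hasDerivAt_fst' (diff_pA hW) t x
  have hB' : HasDerivAt (fun s => pB W (s, x)) (pAB W (t, x)) t := by
    have h := hasDerivAt_fst' (diff_pB hW) t x
    rwa [← mixed_symm hW] at h
  have hW' := hasDerivAt_tau hW t x
  have h3 : HasDerivAt (fun s => (1 - (W s x) ^ 2) ^ 2)
      (2 * (1 - (W t x) ^ 2) ^ 1 * (0 - 2 * (W t x) ^ 1 * pA W (t, x))) t :=
    (((hasDerivAt_const t (1 : ℝ)).sub (hW'.pow 2)).pow 2)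
  have h := ((((hA'.pow 2).add ((hB'.pow 2).const_mul (1 - x ^ 2))).add
      (h3.const_mul (ℓ * (ℓ + 1) / 2))).const_mul (1 / 2 : ℝ))
  have heq : (fun s => energyDensity ℓ W s x) =
      fun s => (1 / 2 : ℝ) * (((pA W (s, x)) ^ 2 + (1 - x ^ 2) * (pB W (s, x)) ^ 2)
        + ℓ * (ℓ + 1) / 2 * (1 - (W s x) ^ 2) ^ 2) := by
    funext s
    simp [energyDensity, pdTau_eq hW, pdX_eq hW]
  rw [heq]
  refine h.congr_deriv ?_
  simp [Gfun]
  ring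

lemma pdTau_pdTau (t x : ℝ) : pdTau (pdTau W) t x = pAA W (t, x) := by
  have h : (fun s => pdTau W s x) = fun s => pA W (s, x) :=
    funext fun s => pdTau_eq hW s x
  show deriv (fun s => pdTau W s x) t = _
  rw [h]
  exact (hasDerivAt_fst' (diff_pA hW) t x).deriv

lemma pdX_pdTau (t x : ℝ) : pdX (pdTau W) t x = pAB W (t, x) := by
  have h : (fun y => pdTau W t y) = fun y => pA W (t, y) :=
    funext fun y => pdTau_eq hW t y
  show deriv (fun y => pdTau W t y) x = _
  rw [h]
  exact (hasDerivAt_snd' (diff_pA hW) t x).deriv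

lemma pdX_flux (t x : ℝ) :
    pdX (fun s y => (1 - y ^ 2) * pdX W s y) t x
      = -(2 * x) * pB W (t, x) + (1 - x ^ 2) * pBB W (t, x) := by
  have h : (fun y => (1 - y ^ 2) * pdX W t y) = fun y => (1 - y ^ 2) * pB W (t, y) :=
    funext fun y => by rw [pdX_eq hW]
  show deriv (fun y => (1 - y ^ 2) * pdX W t y) x = _
  rw [h]
  have hq : HasDerivAt (fun y : ℝ => 1 - y ^ 2) (-(2 * x)) x := by
    have := (hasDerivAt_const x (1 : ℝ)).sub (hasDerivAt_pow 2 x)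
    refine this.congr_deriv ?_
    ring
  exact (hq.mul (hasDerivAt_snd' (diff_pB hW) t x)).deriv

end aux

/-- Energy balance: for a smooth solution of the hyperboloidal Yang-Mills
equation, `d𝓔/dτ = −(∂τW(τ,−1))² − (∂τW(τ,1))²`; in particular `𝓔` is
nonincreasing. -/
theorem energy_balance (ℓ : ℝ) (hℓ : 0 < ℓ) (W : ℝ → ℝ → ℝ)
    (hW : ContDiff ℝ 2 (Function.uncurry W))
    (hPDE : ∀ τ : ℝ, ∀ x ∈ Set.Icc (-1 : ℝ) 1,
      pdTau (pdTau W) τ x + 2 * x * pdX (pdTau W) τ x + pdTau W τ x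
        = pdX (fun s y => (1 - y ^ 2) * pdX W s y) τ x
          + ℓ * (ℓ + 1) * W τ x * (1 - (W τ x) ^ 2)) :
    (∀ τ : ℝ, HasDerivAt (bondiEnergy ℓ W)
        (-(pdTau W τ (-1)) ^ 2 - (pdTau W τ 1) ^ 2) τ)
      ∧ Antitone (bondiEnergy ℓ W) := by
  -- the PDE rewritten in terms of `pA, pB, pAA, pAB, pBB`
  have hP : ∀ t : ℝ, ∀ x ∈ Set.Icc (-1 : ℝ) 1,
      pAA W (t, x) = -(2 * x) * pAB W (t, x) - pA W (t, x)
        + (-(2 * x) * pB W (t, x) + (1 - x ^ 2) * pBB W (t, x))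
        + ℓ * (ℓ + 1) * W t x * (1 - (W t x) ^ 2) := by
    intro t x hx
    have h := hPDE t x hx
    rw [pdTau_pdTau hW, pdX_pdTau hW, pdTau_eq hW, pdX_flux hW] at h
    linarith
  have hmain : ∀ τ : ℝ, HasDerivAt (bondiEnergy ℓ W)
      (-(pdTau W τ (-1)) ^ 2 - (pdTau W τ 1) ^ 2) τ := by
    intro τ
    -- bound for the dominated-derivative theorem
    obtain ⟨M, hM⟩ := ((isCompact_Icc (a := τ - 1) (b := τ + 1)).prod
      (isCompact_Icc (a := (-1 : ℝ)) (b := 1))).exists_bound_of_continuousOn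
      ((cont_Gfun hW ℓ).continuousOn)
    have key := intervalIntegral.hasDerivAt_integral_of_dominated_loc_of_deriv_le
      (F := fun t x => energyDensity ℓ W t x) (F' := fun t x => Gfun ℓ W (t, x))
      (a := (-1 : ℝ)) (b := 1) (x₀ := τ) (s := Metric.ball τ 1) (bound := fun _ => |M|)
      (μ := MeasureTheory.volume) (Metric.ball_mem_nhds τ one_pos)
      (Filter.Eventually.of_forall fun t =>
        (((cont_energyDensity hW ℓ).comp
          (continuous_const.prodMk continuous_id)).aestronglyMeasurable))
      (((cont_energyDensity hW ℓ).comp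
          (continuous_const.prodMk continuous_id)).intervalIntegrable _ _)
      (((cont_Gfun hW ℓ).comp
          (continuous_const.prodMk continuous_id)).aestronglyMeasurable)
      (Filter.Eventually.of_forall fun x hx t ht => by
        have hx' : x ∈ Set.Icc (-1 : ℝ) 1 := by
          rw [Set.uIoc_of_le (by norm_num : (-1 : ℝ) ≤ 1)] at hx
          exact ⟨le_of_lt hx.1, hx.2⟩
        have ht' : t ∈ Set.Icc (τ - 1) (τ + 1) := by
          rw [Metric.mem_ball, Real.dist_eq, abs_lt] at ht
          constructor <;> linarith [ht.1, ht.2]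
        calc ‖Gfun ℓ W (t, x)‖ ≤ M := hM (t, x) (Set.mk_mem_prod ht' hx')
          _ ≤ |M| := le_abs_self M)
      (intervalIntegrable_const)
      (Filter.Eventually.of_forall fun x _ t _ => hasDerivAt_ED_tau hW ℓ t x)
    -- compute the boundary flux via FTC
    have hder : ∀ x ∈ Set.uIcc (-1 : ℝ) 1,
        HasDerivAt (fun y => (1 - y ^ 2) * pA W (τ, y) * pB W (τ, y)
          - y * (pA W (τ, y)) ^ 2) (Gfun ℓ W (τ, x)) x := by
      intro x hx
      have hx' : x ∈ Set.Icc (-1 : ℝ) 1 := by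
        rwa [Set.uIcc_of_le (by norm_num : (-1 : ℝ) ≤ 1)] at hx
      have hAx : HasDerivAt (fun y => pA W (τ, y)) (pAB W (τ, x)) x :=
        hasDerivAt_snd' (diff_pA hW) τ x
      have hBx : HasDerivAt (fun y => pB W (τ, y)) (pBB W (τ, x)) x :=
        hasDerivAt_snd' (diff_pB hW) τ x
      have hq : HasDerivAt (fun y : ℝ => 1 - y ^ 2) (-(2 * x)) x := by
        have := (hasDerivAt_const x (1 : ℝ)).sub (hasDerivAt_pow 2 x)
        refine this.congr_deriv ?_
        ring
      have h1 := (hq.mul hAx).mul hBx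
      have h2 := (hasDerivAt_id x).mul (hAx.pow 2)
      have h := h1.sub h2
      refine h.congr_deriv ?_
      have hPt := hP τ x hx'
      simp only [Gfun, hPt, id_eq, Pi.mul_apply, Pi.pow_apply]
      ring
    have hint : (∫ x in (-1 : ℝ)..1, Gfun ℓ W (τ, x))
        = -(pdTau W τ (-1)) ^ 2 - (pdTau W τ 1) ^ 2 := by
      rw [intervalIntegral.integral_eq_sub_of_hasDerivAt hder
        (((cont_Gfun hW ℓ).comp
          (continuous_const.prodMk continuous_id)).intervalIntegrable _ _)]
      rw [pdTau_eq hW, pdTau_eq hW]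
      norm_num
      ring
    have h2 := key.2
    rw [hint] at h2
    exact h2
  refine ⟨hmain, antitone_of_deriv_nonpos (fun x => (hmain x).differentiableAt) fun x => ?_⟩
  rw [(hmain x).deriv]
  have h1 := sq_nonneg (pdTau W x (-1))
  have h2 := sq_nonneg (pdTau W x 1)
  linarith
end
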